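/- Let C = (p,q,ω,u) be an arithmetic channel, σ an n-repartition of q, x = (x₁,...,x_n) ∈ (Z[X])^n, and λ = (λ_{i,j}^k) ∈ H(x|C,σ), i.e. a 3-tensor over Z_q such that for each (i,j), the element e_{i,j} = x_i·x_j − Σ_k λ_{i,j}^k·x_k satisfies that ⟦C⟧(e_{i,j}) is a multiple of σ[q]_{i,j} in Z_q. Then for every pair (v₁, v₂) of vectors in σZ_q[X]_u (i.e. ⟦C⟧(v_{t,i}) is a multiple of q_{σ(i)} for all i), there exists e ∈ Z_q[X]/(u) with ⟦C⟧(e) = 0 such that (v₁ᵀx)·(v₂ᵀx) = (v₁ ⊠_λ v₂)ᵀ x + e, where v₁ ⊠_λ v₂ = ( Σ_{i,j} λ_{i,j}^k v_{1,i} v_{2,j} )_k. -/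

import Mathlib

open Polynomial

/-- An arithmetic channel `C = (p, q, ω, u)`: positive integers `p < q`, `ω`, and a
polynomial `u ∈ ℤ[X]` with `u(ω) ≡ 0 (mod q)`. -/
structure ArithChannel where
  p : ℕ
  q : ℕ
  ω : ℕ
  u : Polynomial ℤ
  hp : 0 < p
  hq : 0 < q
  hω : 0 < ω
  hpq : p < q
  hu : (q : ℤ) ∣ u.eval (ω : ℤ)

namespace ArithChannel

variable (C : ArithChannel)

/-- The quotient ring `Z_q[X]/(u)`. -/
abbrev Rq : Type :=
  Polynomial (ZMod C.q) ⧸ Ideal.span {C.u.map (Int.castRingHom (ZMod C.q))}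

/-- The evaluation ring homomorphism `⟦C⟧ : Z_q[X]/(u) → Z_q`, `v ↦ v(ω)`. -/
noncomputable def ev : C.Rq →+* ZMod C.q :=
  Ideal.Quotient.lift _ (Polynomial.evalRingHom ((C.ω : ZMod C.q)))
    (by
      intro a ha
      rw [Ideal.mem_span_singleton] at ha
      obtain ⟨b, rfl⟩ := ha
      have hω : ((C.ω : ℤ) : ZMod C.q) = ((C.ω : ZMod C.q)) := by push_cast; ring
      have h0 : (C.u.map (Int.castRingHom (ZMod C.q))).eval ((C.ω : ZMod C.q)) = 0 := by
        rw [← hω, Polynomial.eval_intCast_map]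
        exact (ZMod.intCast_zmod_eq_zero_iff_dvd _ _).mpr C.hu
      simp only [Polynomial.coe_evalRingHom, Polynomial.eval_mul, h0, zero_mul])

/-- The canonical map `ℤ[X] → Z_q[X]/(u)`. -/
noncomputable def toRq : Polynomial ℤ →+* C.Rq :=
  (Ideal.Quotient.mk _).comp (Polynomial.mapRingHom (Int.castRingHom (ZMod C.q)))

end ArithChannel

/-- `qfac q 0 = 1`, and for `i ≥ 1`, `qfac q i` is the `i`-th smallest prime factor of `q`. -/
noncomputable def qfac (q : ℕ) (i : ℕ) : ℕ :=
  if i = 0 then 1 else ((Nat.primeFactors q).sort (· ≤ ·)).getD (i - 1) 1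

/-- `σ[q]_{i,j}` for an `n`-repartition `σ` of `q`. -/
noncomputable def sbrack (q : ℕ) {n : ℕ} (σ : Fin n → ℕ) (i j : Fin n) : ℕ :=
  if σ i ≠ σ j then q / (qfac q (σ i) * qfac q (σ j)) else q / qfac q (σ i)

namespace ArithChannel

variable (C : ArithChannel)

/-- `E(C)`: sections of `⟦C⟧`. -/
def IsSection (r : ZMod C.q → C.Rq) : Prop := ∀ m, C.ev (r m) = m

/-- `e ∈ I_k(C)`: `ι_q(⟦C⟧(e)) ∈ {0, p, …, kp}`. -/
def InI (k : ℕ) (e : C.Rq) : Prop :=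
  ∃ j : ℕ, j ≤ k ∧ ((C.ev e).val : ℤ) = (j : ℤ) * C.p

/-- `c ∈ σZ_q[X]_u`: each `⟦C⟧(c_i)` is a multiple of `q_{σ(i)}` in `Z_q`. -/
def InSigma {n : ℕ} (σ : Fin n → ℕ) (c : Fin n → C.Rq) : Prop :=
  ∀ i, ∃ t : ZMod C.q, C.ev (c i) = (qfac C.q (σ i) : ZMod C.q) * t

/-- `(c, c') ∈ S^x_{C,k}(m|σ)`: the ACES encryption space. -/
def Enc {n : ℕ} (σ : Fin n → ℕ) (x : Fin n → Polynomial ℤ) (k : ℕ) (m : ZMod C.q)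
    (c : Fin n → C.Rq) (c' : C.Rq) : Prop :=
  C.InSigma σ c ∧ ∃ r : ZMod C.q → C.Rq, C.IsSection r ∧ ∃ e : C.Rq,
    C.InI k e ∧ c' = r m + (∑ i, c i * C.toRq (x i)) + e

/-- `S(ℓ) = Σᵢ ι_q(ℓᵢ)·ι_q(⟦C⟧(xᵢ))`, computed in `ℤ`. -/
noncomputable def Sdot {n : ℕ} (x : Fin n → Polynomial ℤ) (ℓ : Fin n → ZMod C.q) : ℤ :=
  ∑ i, ((ℓ i).val : ℤ) * ((C.ev (C.toRq (x i))).val : ℤ)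

/-- The margin of `ℓ` relative to `x`. -/
noncomputable def marg {n : ℕ} (x : Fin n → Polynomial ℤ) (ℓ : Fin n → ZMod C.q) : ℚ :=
  (C.Sdot x ℓ : ℚ) / C.q - ⌊(C.Sdot x ℓ : ℚ) / C.q⌋

/-- `ℓ ∈ L^k_{p,q}(x)`: the `k`-th space of `p`-locators relative to `x`. -/
noncomputable def IsLocator {n : ℕ} (x : Fin n → Polynomial ℤ) (k : ℤ)
    (ℓ : Fin n → ZMod C.q) : Prop :=
  (∑ i, ((C.ev (C.toRq (x i))).val : ℤ)) - ⌊(C.Sdot x ℓ : ℚ) / C.q⌋ = k * C.p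

/-- `δ ∈ D^k_{p,q}(x)`: the `k`-th space of `p`-directors relative to `x`. -/
noncomputable def IsDirector {n : ℕ} (x : Fin n → Polynomial ℤ) (k : ℤ)
    (δ : Fin n → ZMod C.q) : Prop :=
  ⌊(C.Sdot x δ : ℚ) / C.q⌋ = k * C.p

end ArithChannel

/-- Given `λ ∈ H(x|C,σ)` (a 3-tensor over `Z_q` whose defects `e_{i,j}` evaluate under
`⟦C⟧` to multiples of `σ[q]_{i,j}`), for all vectors `v₁, v₂ ∈ σZ_q[X]_u` there exists
`e` with `⟦C⟧(e) = 0` such that `(v₁ᵀx)·(v₂ᵀx) = (v₁ ⊠_λ v₂)ᵀx + e`. -/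
lemma qfac_mem (q i : ℕ) (hi : i ≠ 0) (hle : i ≤ (Nat.primeFactors q).card) :
    qfac q i ∈ Nat.primeFactors q := by
  have hlen : ((Nat.primeFactors q).sort (· ≤ ·)).length = (Nat.primeFactors q).card :=
    Finset.length_sort _
  have hlt : i - 1 < ((Nat.primeFactors q).sort (· ≤ ·)).length := by omega
  rw [qfac, if_neg hi, List.getD_eq_getElem _ _ hlt]
  have := List.getElem_mem hlt
  rwa [Finset.mem_sort] at this

lemma qfac_dvd (q i : ℕ) (hle : i ≤ (Nat.primeFactors q).card) : qfac q i ∣ q := by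
  rcases eq_or_ne i 0 with rfl | hi
  · simp [qfac]
  · exact Nat.dvd_of_mem_primeFactors (qfac_mem q i hi hle)

lemma qfac_ne (q i j : ℕ) (hi : i ≠ 0) (hj : j ≠ 0)
    (hile : i ≤ (Nat.primeFactors q).card) (hjle : j ≤ (Nat.primeFactors q).card)
    (hij : i ≠ j) : qfac q i ≠ qfac q j := by
  have hlen : ((Nat.primeFactors q).sort (· ≤ ·)).length = (Nat.primeFactors q).card :=
    Finset.length_sort _
  have hlt : i - 1 < ((Nat.primeFactors q).sort (· ≤ ·)).length := by omega
  have hlt' : j - 1 < ((Nat.primeFactors q).sort (· ≤ ·)).length := by omega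
  rw [qfac, if_neg hi, List.getD_eq_getElem _ _ hlt, qfac, if_neg hj, List.getD_eq_getElem _ _ hlt']
  have hnd : ((Nat.primeFactors q).sort (· ≤ ·)).Nodup := Finset.sort_nodup _ _
  intro h
  have := List.nodup_iff_injective_get.mp hnd (a₁ := ⟨i - 1, hlt⟩) (a₂ := ⟨j - 1, hlt'⟩) h
  simp only [Fin.mk.injEq] at this
  omega

lemma key_dvd (q : ℕ) {n : ℕ} (σ : Fin n → ℕ) (i j : Fin n)
    (hσ : ∀ i, σ i ≤ (Nat.primeFactors q).card) :
    q ∣ qfac q (σ i) * qfac q (σ j) * sbrack q σ i j := by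
  rcases eq_or_ne (σ i) (σ j) with h | h
  · rw [sbrack, if_neg (by simp [h])]
    have hd : qfac q (σ i) ∣ q := qfac_dvd q _ (hσ i)
    rw [h] at hd ⊢
    rw [mul_assoc, Nat.mul_div_cancel' hd]
    exact Dvd.intro_left _ rfl
  · rw [sbrack, if_pos h]
    have hd : qfac q (σ i) * qfac q (σ j) ∣ q := by
      rcases eq_or_ne (σ i) 0 with h0 | h0
      · simpa [qfac, h0] using qfac_dvd q (σ j) (hσ j)
      rcases eq_or_ne (σ j) 0 with h1 | h1
      · simpa [qfac, h1] using qfac_dvd q (σ i) (hσ i)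
      have hpi := Nat.prime_of_mem_primeFactors (qfac_mem q _ h0 (hσ i))
      have hpj := Nat.prime_of_mem_primeFactors (qfac_mem q _ h1 (hσ j))
      exact Nat.Coprime.mul_dvd_of_dvd_of_dvd
        ((Nat.coprime_primes hpi hpj).mpr (qfac_ne q _ _ h0 h1 (hσ i) (hσ j) h))
        (qfac_dvd q _ (hσ i)) (qfac_dvd q _ (hσ j))
    rw [Nat.mul_div_cancel' hd]

theorem stmt9 (C : ArithChannel) (n : ℕ) (σ : Fin n → ℕ)
    (hσ : ∀ i, σ i ≤ (Nat.primeFactors C.q).card)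
    (x : Fin n → Polynomial ℤ)
    (lam : Fin n → Fin n → Fin n → ZMod C.q)
    (hlam : ∀ i j, ∃ t : ZMod C.q,
      C.ev (C.toRq (x i) * C.toRq (x j) - ∑ k, lam i j k • C.toRq (x k))
        = ((sbrack C.q σ i j : ℕ) : ZMod C.q) * t)
    (v₁ v₂ : Fin n → C.Rq)
    (hv₁ : C.InSigma σ v₁) (hv₂ : C.InSigma σ v₂) :
    ∃ e : C.Rq, C.ev e = 0 ∧
      (∑ i, v₁ i * C.toRq (x i)) * (∑ j, v₂ j * C.toRq (x j))
        = (∑ k, (∑ i, ∑ j, lam i j k • (v₁ i * v₂ j)) * C.toRq (x k)) + e := by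
  refine ⟨∑ i, ∑ j, (v₁ i * v₂ j) *
      (C.toRq (x i) * C.toRq (x j) - ∑ k, lam i j k • C.toRq (x k)), ?_, ?_⟩
  · simp only [map_sum, map_mul]
    refine Finset.sum_eq_zero fun i _ => Finset.sum_eq_zero fun j _ => ?_
    obtain ⟨t₁, h₁⟩ := hv₁ i
    obtain ⟨t₂, h₂⟩ := hv₂ j
    obtain ⟨t, ht⟩ := hlam i j
    rw [h₁, h₂, ht]
    have h0 : ((qfac C.q (σ i) * qfac C.q (σ j) * sbrack C.q σ i j : ℕ) : ZMod C.q) = 0 :=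
      (ZMod.natCast_eq_zero_iff _ _).mpr (key_dvd C.q σ i j hσ)
    push_cast at h0
    calc (qfac C.q (σ i) : ZMod C.q) * t₁ * ((qfac C.q (σ j) : ZMod C.q) * t₂)
          * ((sbrack C.q σ i j : ZMod C.q) * t)
        = ((qfac C.q (σ i) : ZMod C.q) * (qfac C.q (σ j)) * (sbrack C.q σ i j))
          * (t₁ * t₂ * t) := by ring
      _ = 0 := by rw [h0, zero_mul]
  · have h : ∑ k, (∑ i, ∑ j, lam i j k • (v₁ i * v₂ j)) * C.toRq (x k)
        = ∑ i, ∑ j, (v₁ i * v₂ j) * (∑ k, lam i j k • C.toRq (x k)) := by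
      simp only [Finset.sum_mul, Finset.mul_sum, smul_mul_assoc, mul_smul_comm]
      rw [Finset.sum_comm]
      exact Finset.sum_congr rfl fun i _ => Finset.sum_comm
    simp only [mul_sub, Finset.sum_sub_distrib]
    rw [h, add_sub_cancel, Finset.sum_mul_sum]
    exact Finset.sum_congr rfl fun i _ => Finset.sum_congr rfl fun j _ => by ring
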